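/- (Empty space paradox, lower bound direction) In the setting of the previous assumptions (concentration functions α_d(ε) ≤ exp(-aε²d), medians R(ω) of ρ(ω,·) uniformly 1 + o(1), i.i.d. sample X of size n with log n = o(d)), for every ε > 0, with probability tending to 1 the set of query points ω ∈ Ω with dist(ω, X) ≤ 1 - ε has measure at most exp(-Ω(ε²d)). In particular the median nearest-neighbour distance ε_M satisfies liminf_d ε_M ≥ 1. -/

import Mathlib

open MeasureTheory Filter

/-- Empty space paradox, lower bound direction: under gaussian concentration,
medians of distance functions uniformly `1 + o(1)`, and i.i.d. samples of
size `n_d` with `log n_d = o(d)`, for every `ε > 0` there is `b > 0` such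
that, with probability tending to `1`, the set of query points within
distance `1 - ε` of the dataset has measure at most `exp(-b ε² d)`; in
particular (second conjunct) it has measure `< 1/2`, so the median
nearest-neighbour distance is `≥ 1 - ε` eventually, i.e. `liminf ε_M ≥ 1`. -/
theorem empty_space_paradox_lower
    (Ω : ℕ → Type*) [∀ d, MetricSpace (Ω d)] [∀ d, MeasurableSpace (Ω d)]
    [∀ d, BorelSpace (Ω d)]
    (μ : ∀ d, Measure (Ω d)) [∀ d, IsProbabilityMeasure (μ d)]
    (a : ℝ) (ha : 0 < a)
    (hconc : ∀ d : ℕ, ∀ ε : ℝ, 0 < ε → ∀ A : Set (Ω d), MeasurableSet A →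
      1/2 ≤ μ d A →
      μ d (Metric.thickening ε A)ᶜ ≤ ENNReal.ofReal (Real.exp (-a * ε ^ 2 * d)))
    (R : ∀ d, Ω d → ℝ)
    (hmed1 : ∀ d x, 1/2 ≤ μ d {y | R d x ≤ dist x y})
    (hmed2 : ∀ d x, 1/2 ≤ μ d {y | dist x y ≤ R d x})
    (η : ℕ → ℝ) (hη : Tendsto η atTop (nhds 0))
    (hR : ∀ d x, |R d x - 1| ≤ η d)
    (n : ℕ → ℕ) (hn1 : ∀ d, 1 ≤ n d)
    (hn : Tendsto (fun d : ℕ => Real.log (n d) / d) atTop (nhds 0)) :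
    ∀ ε : ℝ, 0 < ε →
      ∃ b : ℝ, 0 < b ∧
        Tendsto
          (fun d : ℕ => (Measure.pi fun _ : Fin (n d) => μ d)
            {x : Fin (n d) → Ω d |
              μ d {ω | Metric.infDist ω (Set.range x) ≤ 1 - ε}
                  ≤ ENNReal.ofReal (Real.exp (-b * ε ^ 2 * d)) ∧
              μ d {ω | Metric.infDist ω (Set.range x) ≤ 1 - ε} < 1/2})
          atTop (nhds 1) := by
  intro ε hε
  refine ⟨a/8, by positivity, ?_⟩
  -- eventual conditions on d
  have hηev : ∀ᶠ d in atTop, η d < ε/4 := hη.eventually_lt_const (by positivity)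
  have hnev : ∀ᶠ d in atTop, Real.log (n d) / d < a * ε^2 / 8 :=
    hn.eventually_lt_const (by positivity)
  have hd1 : ∀ᶠ d : ℕ in atTop, 1 ≤ d := eventually_ge_atTop 1
  have hexp : ∀ᶠ d : ℕ in atTop, Real.exp (-(a/8) * ε^2 * d) < 1/2 := by
    have hlin : Tendsto (fun d : ℕ => -(a/8) * ε^2 * (d:ℝ)) atTop atBot := by
      have : Tendsto (fun d : ℕ => (d:ℝ)) atTop atTop := tendsto_natCast_atTop_atTop
      exact this.const_mul_atTop_of_neg (by nlinarith [mul_pos ha (pow_pos hε 2)])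
    exact (Real.tendsto_exp_atBot.comp hlin).eventually_lt_const (by norm_num)
  have heq : (fun _ : ℕ => (1 : ENNReal)) =ᶠ[atTop]
      (fun d : ℕ => (Measure.pi fun _ : Fin (n d) => μ d)
            {x : Fin (n d) → Ω d |
              μ d {ω | Metric.infDist ω (Set.range x) ≤ 1 - ε}
                  ≤ ENNReal.ofReal (Real.exp (-(a/8) * ε ^ 2 * d)) ∧
              μ d {ω | Metric.infDist ω (Set.range x) ≤ 1 - ε} < 1/2}) := by
    filter_upwards [hηev, hnev, hd1, hexp] with d hηd hnd hd1d hexpd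
    have hset : {x : Fin (n d) → Ω d |
              μ d {ω | Metric.infDist ω (Set.range x) ≤ 1 - ε}
                  ≤ ENNReal.ofReal (Real.exp (-(a/8) * ε ^ 2 * d)) ∧
              μ d {ω | Metric.infDist ω (Set.range x) ≤ 1 - ε} < 1/2} = Set.univ := by
      ext x
      simp only [Set.mem_setOf_eq, Set.mem_univ, iff_true]
      -- key bound
      have key : μ d {ω | Metric.infDist ω (Set.range x) ≤ 1 - ε}
          ≤ ENNReal.ofReal (Real.exp (-(a/8) * ε ^ 2 * d)) := by
        -- per-point bound
        have hpt : ∀ i : Fin (n d), μ d {ω | dist ω (x i) ≤ 1 - ε}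
            ≤ ENNReal.ofReal (Real.exp (-a * (ε/2) ^ 2 * d)) := by
          intro i
          set A : Set (Ω d) := {y | R d (x i) ≤ dist (x i) y} with hAdef
          have hAmeas : MeasurableSet A :=
            (isClosed_le continuous_const (continuous_const.dist continuous_id)).measurableSet
          have hconcA := hconc d (ε/2) (by positivity) A hAmeas (hmed1 d (x i))
          refine le_trans (measure_mono ?_) hconcA
          intro ω hω
          simp only [Set.mem_setOf_eq] at hω
          intro hmem
          rw [Metric.mem_thickening_iff] at hmem
          obtain ⟨y, hyA, hdy⟩ := hmem
          have hRy : R d (x i) ≤ dist (x i) y := hyA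
          have hRlb : 1 - η d ≤ R d (x i) := by
            have := abs_le.mp (hR d (x i))
            linarith [this.1]
          have htri : dist (x i) y ≤ dist (x i) ω + dist ω y := dist_triangle _ _ _
          rw [dist_comm (x i) ω] at htri
          linarith
        -- union bound
        have hsub : {ω : Ω d | Metric.infDist ω (Set.range x) ≤ 1 - ε}
            ⊆ ⋃ i : Fin (n d), {ω | dist ω (x i) ≤ 1 - ε} := by
          intro ω hω
          simp only [Set.mem_setOf_eq] at hω
          have hne : (Set.range x).Nonempty := ⟨x ⟨0, hn1 d⟩, Set.mem_range_self _⟩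
          obtain ⟨y, hy, hdist⟩ :=
            (Set.finite_range x).isCompact.exists_infDist_eq_dist hne ω
          obtain ⟨i, rfl⟩ := hy
          exact Set.mem_iUnion.mpr ⟨i, by simpa [← hdist] using hω⟩
        calc μ d {ω | Metric.infDist ω (Set.range x) ≤ 1 - ε}
            ≤ ∑' i : Fin (n d), μ d {ω | dist ω (x i) ≤ 1 - ε} :=
              (measure_mono hsub).trans (measure_iUnion_le _)
          _ ≤ ∑' _ : Fin (n d), ENNReal.ofReal (Real.exp (-a * (ε/2) ^ 2 * d)) := by
              rw [tsum_fintype, tsum_fintype]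
              exact Finset.sum_le_sum fun i _ => hpt i
          _ = (n d : ENNReal) * ENNReal.ofReal (Real.exp (-a * (ε/2) ^ 2 * d)) := by
              rw [tsum_fintype, Finset.sum_const, Finset.card_univ, Fintype.card_fin,
                nsmul_eq_mul]
          _ = ENNReal.ofReal ((n d : ℝ) * Real.exp (-a * (ε/2) ^ 2 * d)) := by
              rw [ENNReal.ofReal_mul (by positivity), ENNReal.ofReal_natCast]
          _ ≤ ENNReal.ofReal (Real.exp (-(a/8) * ε ^ 2 * d)) := by
              apply ENNReal.ofReal_le_ofReal
              have hn0 : (0:ℝ) < (n d : ℝ) := by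
                exact_mod_cast Nat.lt_of_lt_of_le Nat.zero_lt_one (hn1 d)
              rw [← Real.exp_log hn0, ← Real.exp_add, Real.exp_le_exp]
              have hd0 : (0:ℝ) < (d:ℝ) := by exact_mod_cast hd1d
              have hlog : Real.log (n d) < a * ε^2 / 8 * d := by
                have := (div_lt_iff₀ hd0).mp hnd
                linarith
              nlinarith [sq_nonneg ε, hd0.le]
      exact ⟨key, key.trans_lt (by
        calc ENNReal.ofReal (Real.exp (-(a/8) * ε ^ 2 * d))
            < ENNReal.ofReal (1/2) := ENNReal.ofReal_lt_ofReal_iff (by norm_num) |>.mpr hexpd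
          _ = 1/2 := by rw [ENNReal.ofReal_div_of_pos (by norm_num)]; norm_num)⟩
    rw [hset]
    simp [measure_univ]
  exact Tendsto.congr' heq tendsto_const_nhds
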